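/- Let Γ be a finite connected graph and K a finite connected graph having a vertex of degree 1, such that Υ_sym(K,Γ) = |V(K)| · Υ(K,Γ) > 0. Then for every Aut(Γ)-orbit V of vertices of Γ, the induced subgraph Γ(V) contains a subgraph isomorphic to K. -/

import Mathlib

/-- `X` meets every subgraph of `Γ` isomorphic to `K`. -/
def KCover {W V : Type} (K : SimpleGraph W) (Γ : SimpleGraph V) (X : Set V) : Prop :=
  ∀ f : K →g Γ, Function.Injective f → ∃ w : W, f w ∈ X

/-- `X` is invariant under all automorphisms of `Γ`. -/
def AutInvariant {V : Type} (Γ : SimpleGraph V) (X : Set V) : Prop :=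
  ∀ g : Γ ≃g Γ, (fun v => g v) '' X = X

/-- The vertex representativity `Υ(K, Γ)`. -/
noncomputable def upsilon {W V : Type} (K : SimpleGraph W) (Γ : SimpleGraph V) : ℕ :=
  sInf {m | ∃ X : Set V, X.Finite ∧ Nat.card X = m ∧ KCover K Γ X}

/-- The symmetric vertex representativity `Υ_sym(K, Γ)`. -/
noncomputable def upsilonSym {W V : Type} (K : SimpleGraph W) (Γ : SimpleGraph V) : ℕ :=
  sInf {m | ∃ X : Set V, X.Finite ∧ Nat.card X = m ∧ AutInvariant Γ X ∧ KCover K Γ X}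

/-- The `Aut Γ`-orbit of a vertex. -/
def autOrbit {V : Type} (Γ : SimpleGraph V) (v : V) : Set V :=
  {w | ∃ g : Γ ≃g Γ, g v = w}

section AuxProof

open Finset
open scoped Classical

variable {W V : Type} [Fintype W] [Fintype V] {K : SimpleGraph W} {Γ : SimpleGraph V}

private lemma aux_natcard_set (s : Set V) [Fintype s] : Nat.card s = s.toFinset.card := by
  rw [Set.toFinset_card, Nat.card_eq_fintype_card]

private lemma aux_autFinite (Γ : SimpleGraph V) : Finite (Γ ≃g Γ) :=
  Finite.of_injective (fun (g : Γ ≃g Γ) => (g : V → V)) DFunLike.coe_injective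

private lemma mem_autOrbit_self (v : V) : v ∈ autOrbit Γ v :=
  ⟨RelIso.refl Γ.Adj, rfl⟩

private lemma autOrbit_eq_of_mem {u v : V} (h : u ∈ autOrbit Γ v) :
    autOrbit Γ u = autOrbit Γ v := by
  obtain ⟨g, hg⟩ := h
  ext y
  constructor
  · rintro ⟨g', rfl⟩
    exact ⟨g.trans g', by simp [hg]⟩
  · rintro ⟨g'', rfl⟩
    refine ⟨(g.symm).trans g'', ?_⟩
    show g'' (g.symm u) = g'' v
    rw [← hg, g.symm_apply_apply]

private lemma mem_autOrbit_symm {u v : V} (h : u ∈ autOrbit Γ v) : v ∈ autOrbit Γ u := by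
  obtain ⟨g, hg⟩ := h
  exact ⟨g.symm, by rw [← hg, g.symm_apply_apply]⟩

private lemma smul_mem_autOrbit (g : Γ ≃g Γ) {u v : V} (h : u ∈ autOrbit Γ v) :
    g u ∈ autOrbit Γ v := by
  obtain ⟨g', hg'⟩ := h
  exact ⟨g'.trans g, by simp [hg']⟩

/-- the number of automorphisms sending `p` to `x`, for `x` in the orbit of `p`,
equals the size of the stabilizer of `p`. -/
private lemma aux_card_fix_eq {p x : V} (hx : x ∈ autOrbit Γ p) :
    Nat.card {g : Γ ≃g Γ // g p = x} = Nat.card {g : Γ ≃g Γ // g p = p} := by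
  obtain ⟨g₀, hg₀⟩ := hx
  refine Nat.card_congr ⟨fun ⟨g, hg⟩ => ⟨g.trans g₀.symm, ?_⟩,
    fun ⟨g, hg⟩ => ⟨g.trans g₀, ?_⟩, ?_, ?_⟩
  · show g₀.symm (g p) = p
    rw [hg, ← hg₀, g₀.symm_apply_apply]
  · show g₀ (g p) = x
    rw [hg, hg₀]
  · rintro ⟨g, hg⟩
    apply Subtype.ext
    apply RelIso.ext
    intro a
    show g₀ (g₀.symm (g a)) = g a
    exact g₀.apply_symm_apply _
  · rintro ⟨g, hg⟩
    apply Subtype.ext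
    apply RelIso.ext
    intro a
    show g₀.symm (g₀ (g a)) = g a
    exact g₀.symm_apply_apply _

private lemma aux_card_fix_le (p x : V) :
    Nat.card {g : Γ ≃g Γ // g p = x} ≤ Nat.card {g : Γ ≃g Γ // g p = p} := by
  by_cases h : x ∈ autOrbit Γ p
  · exact le_of_eq (aux_card_fix_eq h)
  · have : IsEmpty {g : Γ ≃g Γ // g p = x} := by
      constructor; rintro ⟨g, hg⟩; exact h ⟨g, hg⟩
    simp [Nat.card_of_isEmpty]

/-- Orbit–stabilizer. -/
private lemma aux_orbit_mul_stab (p : V) :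
    Nat.card (autOrbit Γ p) * Nat.card {g : Γ ≃g Γ // g p = p} = Nat.card (Γ ≃g Γ) := by
  have : Finite (Γ ≃g Γ) := aux_autFinite Γ
  have : Fintype (Γ ≃g Γ) := Fintype.ofFinite _
  have hcard : (Finset.univ : Finset (Γ ≃g Γ)).card
      = ∑ x ∈ (autOrbit Γ p).toFinset, ((Finset.univ : Finset (Γ ≃g Γ)).filter
        (fun g => g p = x)).card := by
    apply Finset.card_eq_sum_card_fiberwise
    intro g _
    rw [Finset.mem_coe, Set.mem_toFinset]
    exact ⟨g, rfl⟩
  have hterm : ∀ x ∈ (autOrbit Γ p).toFinset,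
      ((Finset.univ : Finset (Γ ≃g Γ)).filter (fun g => g p = x)).card
        = Nat.card {g : Γ ≃g Γ // g p = p} := by
    intro x hx
    rw [Set.mem_toFinset] at hx
    rw [← aux_card_fix_eq hx, Nat.card_eq_fintype_card, Fintype.card_subtype]
  rw [Finset.sum_congr rfl hterm, Finset.sum_const, smul_eq_mul] at hcard
  rw [aux_natcard_set, Nat.card_eq_fintype_card (α := Γ ≃g Γ), ← Finset.card_univ, hcard]

/-- The key double counting: for any cover `X` and any copy `f` of `K` in `Γ`,
`|Aut Γ| ≤ ∑_w |X ∩ O_{f w}| * |Stab (f w)|`. -/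
private lemma aux_counting {X : Set V} (hX : KCover K Γ X) {f : K →g Γ}
    (hf : Function.Injective f) :
    Nat.card (Γ ≃g Γ) ≤ ∑ w : W,
      Nat.card (↥(X ∩ autOrbit Γ (f w))) * Nat.card {g : Γ ≃g Γ // g (f w) = f w} := by
  have : Finite (Γ ≃g Γ) := aux_autFinite Γ
  have : Fintype (Γ ≃g Γ) := Fintype.ofFinite _
  -- witness function
  have hwit : ∀ g : Γ ≃g Γ, ∃ w : W, g (f w) ∈ X := by
    intro g
    obtain ⟨w, hw⟩ := hX (g.toHom.comp f) (fun a b hh => hf (g.injective hh))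
    exact ⟨w, hw⟩
  set F : (Γ ≃g Γ) → W := fun g => Classical.choose (hwit g) with hF
  have hFmem : ∀ g : Γ ≃g Γ, g (f (F g)) ∈ X := fun g => Classical.choose_spec (hwit g)
  have hcard : (Finset.univ : Finset (Γ ≃g Γ)).card
      = ∑ w : W, ((Finset.univ : Finset (Γ ≃g Γ)).filter (fun g => F g = w)).card :=
    Finset.card_eq_sum_card_fiberwise (fun g _ => Finset.mem_univ (F g))
  rw [Nat.card_eq_fintype_card, ← Finset.card_univ, hcard]
  apply Finset.sum_le_sum
  intro w _
  set s := (Finset.univ : Finset (Γ ≃g Γ)).filter (fun g => F g = w) with hs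
  have hsc : s.card = ∑ x ∈ (X ∩ autOrbit Γ (f w)).toFinset,
      (s.filter (fun g => g (f w) = x)).card := by
    apply Finset.card_eq_sum_card_fiberwise
    intro g hg
    rw [hs, Finset.mem_coe, Finset.mem_filter] at hg
    rw [Finset.mem_coe, Set.mem_toFinset]
    refine ⟨?_, ⟨g, rfl⟩⟩
    have := hFmem g
    rwa [hg.2] at this
  rw [hsc, aux_natcard_set]
  have h1 : ∑ x ∈ (X ∩ autOrbit Γ (f w)).toFinset, (s.filter (fun g => g (f w) = x)).card
      ≤ ∑ _x ∈ (X ∩ autOrbit Γ (f w)).toFinset,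
          Nat.card {g : Γ ≃g Γ // g (f w) = f w} := by
    apply Finset.sum_le_sum
    intro x _
    calc (s.filter (fun g => g (f w) = x)).card
        ≤ ((Finset.univ : Finset (Γ ≃g Γ)).filter (fun g => g (f w) = x)).card := by
          apply Finset.card_le_card
          intro g hg
          rw [Finset.mem_filter] at hg ⊢
          exact ⟨Finset.mem_univ g, hg.2⟩
      _ = Nat.card {g : Γ ≃g Γ // g (f w) = x} := by
          rw [Nat.card_eq_fintype_card, Fintype.card_subtype]
      _ ≤ Nat.card {g : Γ ≃g Γ // g (f w) = f w} := aux_card_fix_le _ _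
  simpa [Finset.sum_const, smul_eq_mul] using h1

private lemma aux_stab_pos (p : V) : 0 < Nat.card {g : Γ ≃g Γ // g p = p} := by
  have : Finite (Γ ≃g Γ) := aux_autFinite Γ
  have : Nonempty {g : Γ ≃g Γ // g p = p} := ⟨⟨RelIso.refl Γ.Adj, rfl⟩⟩
  exact Nat.card_pos

private lemma aux_orbit_pos (p : V) : 0 < Nat.card (autOrbit Γ p) := by
  have : Nonempty (autOrbit Γ p) := ⟨⟨p, mem_autOrbit_self p⟩⟩
  exact Nat.card_pos

private lemma aux_set_nonempty {s : Set V} (h : 0 < Nat.card s) : s.Nonempty := by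
  by_contra hc
  rw [Set.not_nonempty_iff_eq_empty] at hc
  rw [hc] at h
  simp at h

private lemma aux_inv {S : Set V} (hS : ∀ u u' : V, u' ∈ autOrbit Γ u → (u' ∈ S ↔ u ∈ S)) :
    AutInvariant Γ S := by
  intro g
  ext y
  simp only [Set.mem_image]
  constructor
  · rintro ⟨u, hu, rfl⟩
    exact (hS u (g u) ⟨g, rfl⟩).mpr hu
  · intro hy
    exact ⟨g.symm y, (hS y (g.symm y) ⟨g.symm, rfl⟩).mpr hy, g.apply_symm_apply y⟩

private lemma aux_boundary {T : Set V} {a b : V} (p : Γ.Walk a b) (ha : a ∈ T) (hb : b ∉ T) :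
    ∃ t z, Γ.Adj t z ∧ t ∈ T ∧ z ∉ T := by
  induction p with
  | nil => exact absurd ha hb
  | @cons u v w hadj p ih =>
    by_cases hv : v ∈ T
    · exact ih hv hb
    · exact ⟨u, v, hadj, ha, hv⟩

/-- no copy can exist whose orbit data satisfies the stated inequalities with one strict. -/
private lemma aux_no_copy {X : Set V} (hX : KCover K Γ X) {f : K →g Γ}
    (hf : Function.Injective f)
    (h2 : ∀ w : W, Fintype.card W * Nat.card ↥(X ∩ autOrbit Γ (f w))
      ≤ Nat.card (autOrbit Γ (f w)))
    (h3 : ∃ w : W, Fintype.card W * Nat.card ↥(X ∩ autOrbit Γ (f w)) + 1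
      ≤ Nat.card (autOrbit Γ (f w))) :
    False := by
  obtain ⟨w₀, hw₀⟩ := h3
  have hA := aux_counting hX hf
  set c : W → ℕ := fun w => Nat.card ↥(X ∩ autOrbit Γ (f w)) with hc
  set st : W → ℕ := fun w => Nat.card {g : Γ ≃g Γ // g (f w) = f w} with hst
  set A := Nat.card (Γ ≃g Γ) with hAdef
  have horb : ∀ w : W, Nat.card (autOrbit Γ (f w)) * st w = A := fun w => aux_orbit_mul_stab (f w)
  have step1 : Fintype.card W * A ≤ ∑ w : W, (Fintype.card W * c w) * st w := by
    calc Fintype.card W * A ≤ Fintype.card W * ∑ w : W, c w * st w :=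
          Nat.mul_le_mul_left _ hA
      _ = ∑ w : W, (Fintype.card W * c w) * st w := by
          rw [Finset.mul_sum]
          exact Finset.sum_congr rfl (fun w _ => by ring)
  have hconst : ∑ w : W, Nat.card (autOrbit Γ (f w)) * st w = Fintype.card W * A := by
    rw [Finset.sum_congr rfl (fun w _ => horb w), Finset.sum_const, Finset.card_univ,
      smul_eq_mul]
  have step2 : (∑ w : W, (Fintype.card W * c w) * st w) + st w₀ ≤ Fintype.card W * A := by
    rw [← hconst]
    rw [← Finset.sum_erase_add _ _ (Finset.mem_univ w₀),
        ← Finset.sum_erase_add _ (fun w => Nat.card (autOrbit Γ (f w)) * st w)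
          (Finset.mem_univ w₀)]
    have t1 : (Fintype.card W * c w₀) * st w₀ + st w₀
        ≤ Nat.card (autOrbit Γ (f w₀)) * st w₀ := by
      calc (Fintype.card W * c w₀) * st w₀ + st w₀
          = (Fintype.card W * c w₀ + 1) * st w₀ := by ring
        _ ≤ Nat.card (autOrbit Γ (f w₀)) * st w₀ := Nat.mul_le_mul_right _ hw₀
    have t2 : ∑ w ∈ Finset.univ.erase w₀, (Fintype.card W * c w) * st w
        ≤ ∑ w ∈ Finset.univ.erase w₀, Nat.card (autOrbit Γ (f w)) * st w :=
      Finset.sum_le_sum (fun w _ => Nat.mul_le_mul_right _ (h2 w))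
    omega
  have hstpos : 0 < st w₀ := by simpa [hst] using aux_stab_pos (Γ := Γ) (f w₀)
  omega

end AuxProof

/-- Theorem 2.2: ... -/
theorem stmt9 {W V : Type} [Fintype W] [Fintype V]
    (K : SimpleGraph W) (Γ : SimpleGraph V)
    (hΓ : Γ.Connected) (hK : K.Connected)
    (hpendant : ∃ w : W, Nat.card (K.neighborSet w) = 1)
    (h : upsilonSym K Γ = Fintype.card W * upsilon K Γ)
    (hpos : 0 < upsilonSym K Γ) :
    ∀ v : V, ∃ f : K →g Γ.induce (autOrbit Γ v), Function.Injective f := by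
  classical
  obtain ⟨w₀, hw₀card⟩ := hpendant
  have hWne : Nonempty W := ⟨w₀⟩
  have hW1 : 0 < Fintype.card W := Fintype.card_pos_iff.mpr hWne
  -- the pendant neighbor
  obtain ⟨w₁, hw₁⟩ : ∃ a, K.neighborSet w₀ = {a} := by
    rw [Nat.card_coe_set_eq, Set.ncard_eq_one] at hw₀card; exact hw₀card
  have hadj01 : K.Adj w₀ w₁ := by
    have : w₁ ∈ K.neighborSet w₀ := by rw [hw₁]; rfl
    exact this
  have hnbr : ∀ u, K.Adj w₀ u → u = w₁ := by
    intro u hu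
    have : u ∈ K.neighborSet w₀ := hu
    rwa [hw₁, Set.mem_singleton_iff] at this
  -- a minimum cover X
  have hne : {m | ∃ X : Set V, X.Finite ∧ Nat.card X = m ∧ KCover K Γ X}.Nonempty :=
    ⟨Nat.card (Set.univ : Set V), Set.univ, Set.finite_univ, rfl,
      fun f hf => ⟨w₀, Set.mem_univ _⟩⟩
  obtain ⟨X, hXfin, hXcard, hXcov⟩ := Nat.sInf_mem hne
  have hXcard' : Nat.card ↥X = upsilon K Γ := hXcard
  have hm1 : 1 ≤ upsilon K Γ := by
    by_contra hc
    have h0 : upsilon K Γ = 0 := by omega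
    rw [h0, Nat.mul_zero] at h
    omega
  -- the set T : union of the "dense" orbits
  set T : Set V := {u | Nat.card (autOrbit Γ u)
      ≤ Fintype.card W * Nat.card ↥(X ∩ autOrbit Γ u)} with hTdef
  have hTorb : ∀ {u u' : V}, u' ∈ autOrbit Γ u → (u' ∈ T ↔ u ∈ T) := by
    intro u u' hmem
    have he : autOrbit Γ u' = autOrbit Γ u := autOrbit_eq_of_mem hmem
    simp only [hTdef, Set.mem_setOf_eq, he]
  -- T is a cover
  have hTcov : KCover K Γ T := by
    intro f hf
    by_contra hno
    push_neg at hno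
    have hstrict : ∀ w : W, Fintype.card W * Nat.card ↥(X ∩ autOrbit Γ (f w)) + 1
        ≤ Nat.card (autOrbit Γ (f w)) := by
      intro w
      have := hno w
      simp only [hTdef, Set.mem_setOf_eq, not_le] at this
      omega
    exact aux_no_copy hXcov hf (fun w => by have := hstrict w; omega) ⟨w₀, hstrict w₀⟩
  -- T is invariant
  have hTinv : AutInvariant Γ T := aux_inv (fun u u' hm => hTorb hm)
  -- Finset bookkeeping
  set XF := X.toFinset with hXF
  set TF := T.toFinset with hTF
  set f0 : V → Set V := fun u => autOrbit Γ u with hf0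
  set imT := TF.image f0 with himT
  set imX := XF.image f0 with himX
  have hfilX : ∀ u : V, XF.filter (fun y => f0 y = f0 u) = (X ∩ autOrbit Γ u).toFinset := by
    intro u
    ext y
    simp only [Finset.mem_filter, hXF, Set.mem_toFinset, Set.mem_inter_iff, hf0]
    constructor
    · rintro ⟨hy, he⟩
      exact ⟨hy, he ▸ mem_autOrbit_self y⟩
    · rintro ⟨hy, hm⟩
      exact ⟨hy, autOrbit_eq_of_mem hm⟩
  have hfilT : ∀ u ∈ T, TF.filter (fun y => f0 y = f0 u) = (autOrbit Γ u).toFinset := by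
    intro u hu
    ext y
    simp only [Finset.mem_filter, hTF, Set.mem_toFinset, hf0]
    constructor
    · rintro ⟨hy, he⟩
      exact he ▸ mem_autOrbit_self y
    · intro hm
      exact ⟨(hTorb hm).mpr hu, autOrbit_eq_of_mem hm⟩
  have hTsum : TF.card = ∑ O ∈ imT, (TF.filter (fun y => f0 y = O)).card :=
    Finset.card_eq_sum_card_fiberwise (fun x hx => Finset.mem_image_of_mem f0 hx)
  have hXsum : XF.card = ∑ O ∈ imX, (XF.filter (fun y => f0 y = O)).card :=
    Finset.card_eq_sum_card_fiberwise (fun x hx => Finset.mem_image_of_mem f0 hx)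
  -- pointwise bound on fibers of T
  have hptwise : ∀ O ∈ imT, (TF.filter (fun y => f0 y = O)).card
      ≤ Fintype.card W * (XF.filter (fun y => f0 y = O)).card := by
    intro O hO
    obtain ⟨u₀, hu₀TF, rfl⟩ := Finset.mem_image.mp hO
    have hu₀T : u₀ ∈ T := by rwa [hTF, Set.mem_toFinset] at hu₀TF
    rw [hfilT u₀ hu₀T, hfilX u₀, ← aux_natcard_set, ← aux_natcard_set]
    exact hu₀T
  -- imT ⊆ imX
  have hsubim : imT ⊆ imX := by
    intro O hO
    obtain ⟨u₀, hu₀TF, rfl⟩ := Finset.mem_image.mp hO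
    have hu₀T : u₀ ∈ T := by rwa [hTF, Set.mem_toFinset] at hu₀TF
    have hpos2 : 0 < Nat.card ↥(X ∩ autOrbit Γ u₀) := by
      have h1 := aux_orbit_pos (Γ := Γ) u₀
      have h2 : Nat.card (autOrbit Γ u₀)
          ≤ Fintype.card W * Nat.card ↥(X ∩ autOrbit Γ u₀) := hu₀T
      by_contra hc
      have hc0 : Nat.card ↥(X ∩ autOrbit Γ u₀) = 0 := by omega
      rw [hc0, Nat.mul_zero] at h2
      omega
    obtain ⟨x, hxX, hxO⟩ := aux_set_nonempty hpos2
    refine Finset.mem_image.mpr ⟨x, ?_, ?_⟩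
    · rw [hXF, Set.mem_toFinset]; exact hxX
    · exact autOrbit_eq_of_mem hxO
  -- |T| ≤ |W| * |X|
  have hTXle : TF.card ≤ Fintype.card W * XF.card := by
    calc TF.card = ∑ O ∈ imT, (TF.filter (fun y => f0 y = O)).card := hTsum
      _ ≤ ∑ O ∈ imT, Fintype.card W * (XF.filter (fun y => f0 y = O)).card :=
          Finset.sum_le_sum hptwise
      _ = Fintype.card W * ∑ O ∈ imT, (XF.filter (fun y => f0 y = O)).card := by
          rw [Finset.mul_sum]
      _ ≤ Fintype.card W * ∑ O ∈ imX, (XF.filter (fun y => f0 y = O)).card := by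
          apply Nat.mul_le_mul_left
          exact Finset.sum_le_sum_of_subset hsubim
      _ = Fintype.card W * XF.card := by rw [← hXsum]
  -- conclude |T| = υ_sym = |W| * |X|
  have hXFcard : XF.card = upsilon K Γ := by rw [hXF, ← aux_natcard_set]; exact hXcard'
  have hTnat : Nat.card ↥T = TF.card := by rw [hTF, aux_natcard_set]
  have hsymleT : upsilonSym K Γ ≤ Nat.card ↥T :=
    Nat.sInf_le ⟨T, Set.toFinite T, rfl, hTinv, hTcov⟩
  have hTeqcard : TF.card = Fintype.card W * XF.card := by
    have : upsilonSym K Γ = Fintype.card W * XF.card := by rw [h, hXFcard]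
    omega
  have hTsym : Nat.card ↥T = upsilonSym K Γ := by
    rw [hTnat, hTeqcard, h, hXFcard]
  -- extract the equality information
  have hsum_eqT : ∑ O ∈ imT, (TF.filter (fun y => f0 y = O)).card
      = ∑ O ∈ imT, Fintype.card W * (XF.filter (fun y => f0 y = O)).card := by
    have hup : ∑ O ∈ imT, Fintype.card W * (XF.filter (fun y => f0 y = O)).card
        ≤ Fintype.card W * XF.card := by
      rw [← Finset.mul_sum]
      apply Nat.mul_le_mul_left
      rw [hXsum]
      exact Finset.sum_le_sum_of_subset hsubim
    have hlow := Finset.sum_le_sum hptwise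
    omega
  have hfib_eq : ∀ O ∈ imT, (TF.filter (fun y => f0 y = O)).card
      = Fintype.card W * (XF.filter (fun y => f0 y = O)).card :=
    (Finset.sum_eq_sum_iff_of_le hptwise).mp hsum_eqT
  -- every element of X lies in T
  have hsums_eq : ∑ O ∈ imT, (XF.filter (fun y => f0 y = O)).card
      = ∑ O ∈ imX, (XF.filter (fun y => f0 y = O)).card := by
    have e1 : Fintype.card W * ∑ O ∈ imT, (XF.filter (fun y => f0 y = O)).card
        = TF.card := by rw [Finset.mul_sum, ← hsum_eqT, ← hTsum]
    have e2 : Fintype.card W * ∑ O ∈ imX, (XF.filter (fun y => f0 y = O)).card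
        = Fintype.card W * XF.card := by rw [← hXsum]
    have := hTeqcard
    have hmono : ∑ O ∈ imT, (XF.filter (fun y => f0 y = O)).card
        ≤ ∑ O ∈ imX, (XF.filter (fun y => f0 y = O)).card :=
      Finset.sum_le_sum_of_subset hsubim
    have : Fintype.card W * ∑ O ∈ imT, (XF.filter (fun y => f0 y = O)).card
        = Fintype.card W * ∑ O ∈ imX, (XF.filter (fun y => f0 y = O)).card := by omega
    exact Nat.eq_of_mul_eq_mul_left hW1 this
  have hXsubT : ∀ x ∈ X, x ∈ T := by
    intro x hxX
    have hxXF : x ∈ XF := by rw [hXF, Set.mem_toFinset]; exact hxX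
    have hximX : f0 x ∈ imX := Finset.mem_image_of_mem f0 hxXF
    have hximT : f0 x ∈ imT := by
      by_contra hc
      have hzero : ∑ O ∈ imX \ imT, (XF.filter (fun y => f0 y = O)).card = 0 := by
        have hsd : (∑ O ∈ imX \ imT, (XF.filter (fun y => f0 y = O)).card)
            + ∑ O ∈ imT, (XF.filter (fun y => f0 y = O)).card
            = ∑ O ∈ imX, (XF.filter (fun y => f0 y = O)).card :=
          Finset.sum_sdiff hsubim
        omega
      have hmem : f0 x ∈ imX \ imT := Finset.mem_sdiff.mpr ⟨hximX, hc⟩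
      have hx0 : (XF.filter (fun y => f0 y = f0 x)).card = 0 :=
        (Finset.sum_eq_zero_iff.mp hzero) (f0 x) hmem
      have : x ∈ XF.filter (fun y => f0 y = f0 x) := Finset.mem_filter.mpr ⟨hxXF, rfl⟩
      rw [Finset.card_eq_zero] at hx0
      rw [hx0] at this
      exact absurd this (Finset.notMem_empty x)
    obtain ⟨u₀, hu₀TF, hu₀O⟩ := Finset.mem_image.mp hximT
    have hu₀T : u₀ ∈ T := by rwa [hTF, Set.mem_toFinset] at hu₀TF
    have : x ∈ autOrbit Γ u₀ := by
      have : x ∈ f0 x := mem_autOrbit_self x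
      rwa [← hu₀O] at this
    exact (hTorb this).mpr hu₀T
  -- per-orbit equality for orbits inside T
  have hTeq : ∀ u ∈ T, Nat.card (autOrbit Γ u)
      = Fintype.card W * Nat.card ↥(X ∩ autOrbit Γ u) := by
    intro u hu
    have huTF : u ∈ TF := by rw [hTF, Set.mem_toFinset]; exact hu
    have h1 := hfib_eq (f0 u) (Finset.mem_image_of_mem f0 huTF)
    rwa [hfilT u hu, hfilX u, ← aux_natcard_set, ← aux_natcard_set] at h1
  -- every copy of K lies inside T
  have hP1 : ∀ (f : K →g Γ), Function.Injective f → ∀ w, f w ∈ T := by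
    intro f hf
    by_contra hc
    push_neg at hc
    obtain ⟨wstar, hwstar⟩ := hc
    have hempty : ∀ w : W, f w ∉ T → Nat.card ↥(X ∩ autOrbit Γ (f w)) = 0 := by
      intro w hw
      by_contra hc2
      have hpos2 : 0 < Nat.card ↥(X ∩ autOrbit Γ (f w)) := Nat.pos_of_ne_zero hc2
      obtain ⟨x, hxX, hxO⟩ := aux_set_nonempty hpos2
      exact hw ((hTorb hxO).mp (hXsubT x hxX))
    apply aux_no_copy hXcov hf
    · intro w
      by_cases hw : f w ∈ T
      · exact le_of_eq (hTeq (f w) hw).symm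
      · rw [hempty w hw]; simp
    · refine ⟨wstar, ?_⟩
      rw [hempty wstar hwstar]
      have := aux_orbit_pos (Γ := Γ) (f wstar)
      omega
  -- every orbit inside T is rich
  have hRich : ∀ t, t ∈ T → ∃ f : K →g Γ, Function.Injective f ∧ ∀ w, f w ∈ autOrbit Γ t := by
    intro t ht
    have hOorb : ∀ u u' : V, u' ∈ autOrbit Γ u →
        (u' ∈ autOrbit Γ t ↔ u ∈ autOrbit Γ t) := by
      intro u u' hm
      constructor
      · intro hu'
        have := autOrbit_eq_of_mem hu'
        rw [← this]
        exact mem_autOrbit_symm hm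
      · intro hu
        rw [← autOrbit_eq_of_mem hu]
        exact hm
    have hdiffinv : AutInvariant Γ (T \ autOrbit Γ t) := by
      apply aux_inv
      intro u u' hm
      simp only [Set.mem_diff]
      rw [hTorb hm, hOorb u u' hm]
    have hssub : (T \ autOrbit Γ t).toFinset ⊂ TF := by
      rw [hTF]
      constructor
      · intro y hy
        rw [Set.mem_toFinset] at hy ⊢
        exact hy.1
      · intro hcon
        have : t ∈ (T \ autOrbit Γ t).toFinset := hcon (by rw [Set.mem_toFinset]; exact ht)
        rw [Set.mem_toFinset] at this
        exact this.2 (mem_autOrbit_self t)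
    have hlt : Nat.card ↥(T \ autOrbit Γ t) < upsilonSym K Γ := by
      rw [aux_natcard_set]
      calc (T \ autOrbit Γ t).toFinset.card < TF.card := Finset.card_lt_card hssub
        _ = upsilonSym K Γ := by rw [← hTnat, hTsym]
    have hnc : ¬ KCover K Γ (T \ autOrbit Γ t) := by
      intro hcv
      have hmem : Nat.card ↥(T \ autOrbit Γ t) ∈ {m | ∃ Y : Set V, Y.Finite
          ∧ Nat.card Y = m ∧ AutInvariant Γ Y ∧ KCover K Γ Y} :=
        ⟨T \ autOrbit Γ t, Set.toFinite _, rfl, hdiffinv, hcv⟩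
      have hle : upsilonSym K Γ ≤ Nat.card ↥(T \ autOrbit Γ t) := Nat.sInf_le hmem
      omega
    rw [KCover] at hnc
    push_neg at hnc
    obtain ⟨f, hf, hmiss⟩ := hnc
    refine ⟨f, hf, fun w => ?_⟩
    have h1 := hP1 f hf w
    have h2 := hmiss w
    by_contra hO
    exact h2 ⟨h1, hO⟩
  -- T is everything
  have hTall : ∀ u, u ∈ T := by
    by_contra hc
    push_neg at hc
    obtain ⟨v₀, hv₀⟩ := hc
    have hXne : X.Nonempty := aux_set_nonempty (by omega)
    obtain ⟨x, hx⟩ := hXne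
    have hxT : x ∈ T := hXsubT x hx
    obtain ⟨p⟩ := hΓ.preconnected x v₀
    obtain ⟨t, z, htz, htT, hzT⟩ := aux_boundary p hxT hv₀
    obtain ⟨f, hf, hfO⟩ := hRich t htT
    obtain ⟨g, hg⟩ := hfO w₁
    set f₂ : K →g Γ := SimpleGraph.Hom.comp g.symm.toHom f with hf₂
    have hf₂app : ∀ w, f₂ w = g.symm (f w) := fun w => rfl
    have hf₂O : ∀ w, f₂ w ∈ autOrbit Γ t := fun w => by
      rw [hf₂app]; exact smul_mem_autOrbit g.symm (hfO w)
    have hf₂w₁ : f₂ w₁ = t := by rw [hf₂app, ← hg, g.symm_apply_apply]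
    have hf₂inj : Function.Injective f₂ := fun a b hab => hf (g.symm.injective hab)
    have hf₂T : ∀ w, f₂ w ∈ T := fun w => (hTorb (hf₂O w)).mpr htT
    have hzne : ∀ w, z ≠ f₂ w := by
      intro w he
      exact hzT (he ▸ hf₂T w)
    have hmadj : ∀ {a b : W}, K.Adj a b →
        Γ.Adj (if a = w₀ then z else f₂ a) (if b = w₀ then z else f₂ b) := by
      intro a b hab
      by_cases ha : a = w₀ <;> by_cases hb : b = w₀
      · rw [ha, hb] at hab
        exact absurd rfl hab.ne
      · subst ha
        have hbw : b = w₁ := hnbr b hab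
        rw [if_pos rfl, if_neg hb, hbw, hf₂w₁]
        exact htz.symm
      · subst hb
        have haw : a = w₁ := hnbr a hab.symm
        rw [if_pos rfl, if_neg ha, haw, hf₂w₁]
        exact htz
      · rw [if_neg ha, if_neg hb]
        exact f₂.map_adj hab
    set h' : K →g Γ := ⟨fun w => if w = w₀ then z else f₂ w, hmadj⟩ with hh'
    have hh'app : ∀ w, h' w = if w = w₀ then z else f₂ w := fun w => rfl
    have hinj' : Function.Injective h' := by
      intro a b hab
      rw [hh'app, hh'app] at hab
      by_cases ha : a = w₀ <;> by_cases hb : b = w₀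
      · rw [ha, hb]
      · rw [if_pos ha, if_neg hb] at hab
        exact absurd hab (hzne b)
      · rw [if_neg ha, if_pos hb] at hab
        exact absurd hab.symm (hzne a)
      · rw [if_neg ha, if_neg hb] at hab
        exact hf₂inj hab
    have := hP1 h' hinj' w₀
    rw [hh'app, if_pos rfl] at this
    exact hzT this
  -- conclusion
  intro v
  obtain ⟨f, hf, hfO⟩ := hRich v (hTall v)
  refine ⟨⟨fun w => ⟨f w, hfO w⟩, fun {a b} hab => f.map_adj hab⟩, ?_⟩
  intro a b hab
  exact hf (congrArg Subtype.val hab)
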